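/- Let N be a positive integer, a/c a cusp with c | N and gcd(a,c)=1, and factor N = c₀·d₀ where c₀ has the same prime divisors as c and gcd(c₀,d₀)=1. Choose α₁ = [[a,b],[c,d]] ∈ SL₂(ℤ) with d₀ | d. Let h be a positive integer with N | c²h, and set α_h = α₁·[[h,0],[0,1]]. Then for any γ = [[A,B],[C,D]] ∈ SL₂(ℤ) with Nh_c | C (where h = h_c·h_d, h_c | c₀, h_d | d₀) and (A - D)·c ≡ 0 (mod c₀), the matrix α_h γ α_h⁻¹ has integer entries and lies in Γ₀(N). In particular its lower-left entry −Bc²h + (A−D)cd + Cd²/h is an integer divisible by N. -/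

import Mathlib

/-- with a well-chosen matrix `α₁` (lower-right entry divisible by
the prime-to-`c` part `d₀` of `N`), conjugation of suitable `γ` by `α_h` lands
in `Γ₀(N)`, with lower-left entry `−Bc²h + (A−D)cd + Cd²/h` divisible by `N`. -/
theorem stmt_11 (N : ℕ) (hN : 0 < N) (c₀ d₀ c a b d : ℤ)
    (hfact : (N : ℤ) = c₀ * d₀) (hcop : IsCoprime c₀ d₀)
    (hcN : c ∣ (N : ℤ)) (hsameprimes : ∀ p : ℤ, Prime p → (p ∣ c₀ ↔ p ∣ c))
    (hdet : a * d - b * c = 1) (hd₀d : d₀ ∣ d)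
    (h h_c h_d : ℕ) (hh : 0 < h) (hw : (N : ℤ) ∣ c ^ 2 * h)
    (hhfact : (h : ℤ) = h_c * h_d) (hhc : (h_c : ℤ) ∣ c₀) (hhd : (h_d : ℤ) ∣ d₀)
    (A B C D : ℤ) (hγdet : A * D - B * C = 1)
    (hC : ((N : ℤ) * h_c) ∣ C) (hAD : c₀ ∣ (A - D) * c) :
    ∃ M : Matrix (Fin 2) (Fin 2) ℤ,
      M.map ((↑) : ℤ → ℚ) =
        (!![(a : ℚ) * h, b; c * h, d]) * (!![(A : ℚ), B; C, D]) *
          (!![(a : ℚ) * h, b; c * h, d])⁻¹ ∧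
      M.det = 1 ∧
      (h : ℤ) * M 1 0 = -B * c ^ 2 * h ^ 2 + (A - D) * c * d * h + C * d ^ 2 ∧
      (N : ℤ) ∣ M 1 0 := by
  have hhdN : (h_d : ℤ) ∣ (N : ℤ) := hfact ▸ dvd_mul_of_dvd_right hhd c₀
  have hhC : (h : ℤ) ∣ C := by
    refine dvd_trans ?_ hC
    rw [hhfact, mul_comm (N : ℤ) (h_c : ℤ)]
    exact mul_dvd_mul_left _ hhdN
  obtain ⟨k, hk⟩ := hhC
  have h1 : (a : ℚ) * d - b * c = 1 := by exact_mod_cast hdet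
  have h2 : (C : ℚ) = (h : ℚ) * k := by exact_mod_cast hk
  set M : Matrix (Fin 2) (Fin 2) ℤ :=
    !![a*A*d + b*k*d - a*c*B*h - b*c*D, -(a*b*A) - b^2*k + a^2*B*h + a*b*D;
       c*d*(A-D) + k*d^2 - B*c^2*h, -(b*c*A) - b*d*k + a*c*B*h + a*d*D] with hM
  have hXdet : (!![(a : ℚ) * h, b; c * h, d]).det = (h : ℚ) := by
    rw [Matrix.det_fin_two_of]
    linear_combination (h : ℚ) * h1
  have hX : IsUnit (!![(a : ℚ) * h, b; c * h, d]).det := by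
    rw [hXdet]
    exact isUnit_iff_ne_zero.mpr (by exact_mod_cast hh.ne')
  haveI := (!![(a : ℚ) * h, b; c * h, d]).invertibleOfIsUnitDet hX
  have hmap : M.map ((↑) : ℤ → ℚ) =
      (!![(a : ℚ) * h, b; c * h, d]) * (!![(A : ℚ), B; C, D]) *
        (!![(a : ℚ) * h, b; c * h, d])⁻¹ := by
    symm
    rw [Matrix.mul_inv_eq_iff_eq_mul_of_invertible]
    ext i j
    fin_cases i <;> fin_cases j <;>
      simp [hM, Matrix.mul_apply, Fin.sum_univ_succ] <;>
      push_cast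
    · linear_combination (-(h : ℚ)*(a*A + b*k)) * h1 + b * h2
    · linear_combination (-((a : ℚ)*B*h + b*D)) * h1
    · linear_combination (-(h : ℚ)*(c*A + d*k)) * h1 + d * h2
    · linear_combination (-((B : ℚ)*c*h + d*D)) * h1
  have hYdet : (!![(A : ℚ), B; C, D]).det = 1 := by
    rw [Matrix.det_fin_two_of]; exact_mod_cast hγdet
  refine ⟨M, hmap, ?_, ?_, ?_⟩
  · rw [hM, Matrix.det_fin_two_of]
    linear_combination ((a*d - b*c + 1)*(A*D - B*(h : ℤ)*k)) * hdet + hγdet + B * hk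
  · have hM10 : M 1 0 = c*d*(A-D) + k*d^2 - B*c^2*h := by simp [hM]
    rw [hM10, hk]; ring
  · have hM10 : M 1 0 = c*d*(A-D) + k*d^2 - B*c^2*h := by simp [hM]
    rw [hM10]
    have d1 : (N : ℤ) ∣ c*d*(A-D) := by
      rw [hfact]
      have := mul_dvd_mul hAD hd₀d
      rw [show c*d*(A-D) = (A-D)*c*d by ring]; exact this
    have d2 : (N : ℤ) ∣ k*d^2 := by
      have hc0 : (h_c : ℤ) ≠ 0 := by
        rintro h0
        rw [h0, zero_mul] at hhfact
        exact_mod_cast hh.ne' (by exact_mod_cast hhfact)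
      have key : (h_c : ℤ) * ((N : ℤ) * 1) ∣ (h_c : ℤ) * (h_d * k) := by
        have e : (h_c : ℤ) * (h_d * k) = C := by rw [hk, hhfact]; ring
        rw [e, mul_one, mul_comm (h_c : ℤ) (N : ℤ)]
        exact hC
      have hNhd : (N : ℤ) ∣ h_d * k := by
        have := (mul_dvd_mul_iff_left hc0).mp key
        rwa [mul_one] at this
      have hdk : (h_d : ℤ) * k ∣ k * d^2 := by
        obtain ⟨e, he⟩ := dvd_trans hhd hd₀d
        exact ⟨e*d, by rw [he]; ring⟩
      exact dvd_trans hNhd hdk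
    have d3 : (N : ℤ) ∣ B*(c^2*h) := Dvd.dvd.mul_left hw B
    have := dvd_sub (dvd_add d1 d2) d3
    rw [show c*d*(A-D) + k*d^2 - B*c^2*h = c*d*(A-D) + k*d^2 - B*(c^2*h) by ring]; exact this
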